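/- arXiv:2008.04841 — 4 statements merged into one kernel-verified Lean document; each statement's English description precedes it below -/
import Mathlib

section
/- Main lacunary recurrence for Lucas numbers: for integers N ≥ 2 and n with n ≥ 2N, letting d = ⌊⌊n/N⌋/2⌋, we have L_n = L_N * Σ_{i=1}^{d} (-1)^{(N+1)(i+1)} L_{n-(2i-1)N} + (-1)^{(N+1)(d+2)} L_{n-2dN}. -/
def lucas : ℕ → ℕ
  | 0 => 2
  | 1 => 1
  | n + 2 => lucas (n + 1) + lucas n

lemma lucas_cast (a : ℕ) : (lucas (a + 2) : ℤ) = lucas (a + 1) + lucas a := by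
  rw [lucas]; push_cast; ring

lemma lucas_key : ∀ b a : ℕ, (lucas (a + 2 * b) : ℤ)
    = lucas b * lucas (a + b) + (-1) ^ (b + 1) * lucas a := by
  intro b
  induction b using Nat.twoStepInduction with
  | zero => intro a; simp [lucas]; ring
  | one => intro a; simp [lucas, lucas_cast a]
  | more b ih1 ih2 =>
    intro a
    have h1 := ih2 (a + 1)
    have h2 := ih1 (a + 2)
    rw [show a + 1 + 2 * (b + 1) = a + 2 * b + 3 from by ring,
      show a + 1 + (b + 1) = a + b + 2 from by ring] at h1
    rw [show a + 2 + 2 * b = a + 2 * b + 2 from by ring,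
      show a + 2 + b = a + b + 2 from by ring] at h2
    rw [show a + 2 * (b + 2) = a + 2 * b + 2 + 2 from by ring, lucas_cast,
      show a + 2 * b + 2 + 1 = a + 2 * b + 3 from rfl, h1, h2,
      show a + (b + 2) = a + b + 2 from by ring,
      show b + 2 = b + 1 + 1 from rfl, lucas_cast b, lucas_cast a]
    ring

lemma lucas_key' (N n : ℕ) (hn : 2 * N ≤ n) : (lucas n : ℤ)
    = lucas N * lucas (n - N) + (-1) ^ (N + 1) * lucas (n - 2 * N) := by
  have h := lucas_key N (n - 2 * N)
  rw [show n - 2 * N + 2 * N = n from by omega,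
    show n - 2 * N + N = n - N from by omega] at h
  exact h

lemma lucas_aux (N : ℕ) (hN : 2 ≤ N) : ∀ e n : ℕ, 2 * N * (e + 1) ≤ n →
    (lucas n : ℤ) =
      lucas N * ∑ i ∈ Finset.range (e + 1),
          ((-1 : ℤ) ^ (N + 1)) ^ (i + 2) * lucas (n - (2 * i + 1) * N) +
        ((-1 : ℤ) ^ (N + 1)) ^ (e + 3) * lucas (n - (2 * e + 2) * N) := by
  intro e
  obtain ⟨s, hs⟩ : ∃ s : ℤ, s = (-1) ^ (N + 1) := ⟨_, rfl⟩
  have hs2 : s ^ 2 = 1 := by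
    rw [hs, ← pow_mul]
    exact Even.neg_one_pow ⟨N + 1, by ring⟩
  rw [← hs]
  induction e with
  | zero =>
    intro n hn
    have h := lucas_key' N n (by simpa using hn)
    rw [← hs] at h
    rw [Finset.sum_range_one,
      show (2 * 0 + 1) * N = N from by ring, show (2 * 0 + 2) * N = 2 * N from by ring, h]
    linear_combination (-((lucas N : ℤ) * (lucas (n - N) : ℤ) + s * (lucas (n - 2 * N) : ℤ))) * hs2
  | succ e ih =>
    intro n hn
    have hn2 : 2 * N * (e + 1) + 2 * N ≤ n := by
      have : 2 * N * (e + 1 + 1) = 2 * N * (e + 1) + 2 * N := by ring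
      linarith
    have hm : 2 * N * (e + 1) ≤ n - 2 * N := Nat.le_sub_of_add_le hn2
    have h := ih (n - 2 * N) hm
    have hkey := lucas_key' N n (by linarith [Nat.le_add_left (2 * N) (2 * N * (e + 1))])
    rw [← hs] at hkey
    have hidx : ∀ i : ℕ, n - 2 * N - (2 * i + 1) * N = n - (2 * (i + 1) + 1) * N := by
      intro i; rw [Nat.sub_sub]; congr 1; ring
    have hidx2 : n - 2 * N - (2 * e + 2) * N = n - (2 * (e + 1) + 2) * N := by
      rw [Nat.sub_sub]; congr 1; ring
    simp only [hidx, hidx2] at h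
    rw [Finset.sum_range_succ' (fun i => s ^ (i + 2) * (lucas (n - (2 * i + 1) * N) : ℤ)) (e + 1)]
    rw [hkey, h, show (2 * 0 + 1) * N = N from by ring]
    have hsum : ∑ k ∈ Finset.range (e + 1),
        s ^ (k + 1 + 2) * (lucas (n - (2 * (k + 1) + 1) * N) : ℤ)
        = s * ∑ k ∈ Finset.range (e + 1),
            s ^ (k + 2) * (lucas (n - (2 * (k + 1) + 1) * N) : ℤ) := by
      rw [Finset.mul_sum]
      exact Finset.sum_congr rfl fun k _ => by ring
    rw [hsum]
    linear_combination (-(lucas N : ℤ) * (lucas (n - N) : ℤ)) * hs2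

theorem lucas_lacunary (N n : ℕ) (hN : 2 ≤ N) (hn : 2 * N ≤ n) :
    (lucas n : ℤ) =
      (lucas N : ℤ) *
          ∑ i ∈ Finset.Icc 1 (n / N / 2),
            (-1 : ℤ) ^ ((N + 1) * (i + 1)) * lucas (n - (2 * i - 1) * N) +
        (-1 : ℤ) ^ ((N + 1) * (n / N / 2 + 2)) * lucas (n - 2 * (n / N / 2) * N) := by
  have hN0 : 0 < N := by omega
  have hd1 : 1 ≤ n / N / 2 := by
    have h2 : 2 ≤ n / N := (Nat.le_div_iff_mul_le hN0).2 (by omega)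
    omega
  obtain ⟨e, he⟩ : ∃ e, n / N / 2 = e + 1 := ⟨n / N / 2 - 1, by omega⟩
  have hdn : 2 * N * (e + 1) ≤ n := by
    have h1 : 2 * (e + 1) ≤ n / N := by
      have := Nat.div_mul_le_self (n / N) 2
      omega
    have := (Nat.le_div_iff_mul_le hN0).1 h1
    linarith
  have haux := lucas_aux N hN e n hdn
  rw [he]
  -- convert Icc sum to range sum
  rw [← Finset.Ico_add_one_right_eq_Icc, Finset.sum_Ico_eq_sum_range]
  simp only [pow_mul, show e + 1 + 1 - 1 = e + 1 from by omega]
  have hcong : ∀ i ∈ Finset.range (e + 1),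
      ((-1 : ℤ) ^ (N + 1)) ^ (1 + i + 1) * (lucas (n - (2 * (1 + i) - 1) * N) : ℤ)
      = ((-1 : ℤ) ^ (N + 1)) ^ (i + 2) * (lucas (n - (2 * i + 1) * N) : ℤ) := by
    intro i _
    rw [show 1 + i + 1 = i + 2 from by ring, show 2 * (1 + i) - 1 = 2 * i + 1 from by omega]
  rw [Finset.sum_congr rfl hcong, show 2 * (e + 1) * N = (2 * e + 2) * N from by ring]
  exact haux
end

section
/- For integers n, N with n ≥ 2N + 2 and N ≥ 3: f_{N-3} f_{n-N-1} + f_{n-2} - f_{N-2} f_{n-N-2} - f_N f_{n-N-2} - f_{N-2} f_{n-N-2} = (-1)^{N+1} L_{n-2N}, where f_k = F_{k+1} and L is the Lucas sequence. -/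
lemma lucas_eq : ∀ m : ℕ, lucas (m + 1) = Nat.fib m + Nat.fib (m + 2)
  | 0 => rfl
  | 1 => rfl
  | (m + 2) => by
    rw [show m + 2 + 1 = (m + 1) + 2 from rfl, lucas, lucas_eq (m + 1), lucas_eq m]
    simp [Nat.fib_add_two]
    ring

lemma cassini : ∀ a : ℕ,
    (Nat.fib (a + 1) : ℤ) ^ 2 + Nat.fib (a + 1) * Nat.fib (a + 2) - Nat.fib (a + 2) ^ 2
      = (-1) ^ a
  | 0 => by norm_num
  | (a + 1) => by
    have h := cassini a
    have h2 : (Nat.fib (a + 3) : ℤ) = Nat.fib (a + 1) + Nat.fib (a + 2) := by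
      rw [show a + 3 = (a + 1) + 2 from rfl, Nat.fib_add_two]; push_cast; ring
    rw [h2, pow_succ]
    linear_combination (-1 : ℤ) * h

lemma key (a b : ℕ) :
    (Nat.fib (a + 1) : ℤ) * Nat.fib (a + b + 5) + Nat.fib (2 * a + b + 7)
      - Nat.fib (a + 2) * Nat.fib (a + b + 4)
      - Nat.fib (a + 4) * Nat.fib (a + b + 4)
      - Nat.fib (a + 2) * Nat.fib (a + b + 4)
      = (-1) ^ a * lucas (b + 2) := by
  have h1 : (Nat.fib (a + b + 4) : ℤ)
      = Nat.fib (a + 2) * Nat.fib (b + 1) + Nat.fib (a + 3) * Nat.fib (b + 2) := by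
    rw [show a + b + 4 = (a + 2) + (b + 1) + 1 from by omega, Nat.fib_add]; push_cast; ring
  have h2 : (Nat.fib (a + b + 5) : ℤ)
      = Nat.fib (a + 2) * Nat.fib (b + 2) + Nat.fib (a + 3) * Nat.fib (b + 3) := by
    rw [show a + b + 5 = (a + 2) + (b + 2) + 1 from by omega, Nat.fib_add]; push_cast; ring
  have h3 : (Nat.fib (2 * a + b + 7) : ℤ)
      = Nat.fib (a + 2) * Nat.fib (a + b + 4) + Nat.fib (a + 3) * Nat.fib (a + b + 5) := by
    rw [show 2 * a + b + 7 = (a + 2) + (a + b + 4) + 1 from by omega, Nat.fib_add]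
    push_cast; ring
  have ha3 : (Nat.fib (a + 3) : ℤ) = Nat.fib (a + 1) + Nat.fib (a + 2) := by
    rw [show a + 3 = (a + 1) + 2 from rfl, Nat.fib_add_two]; push_cast; ring
  have ha4 : (Nat.fib (a + 4) : ℤ) = Nat.fib (a + 2) + Nat.fib (a + 3) := by
    rw [show a + 4 = (a + 2) + 2 from rfl, Nat.fib_add_two]; push_cast; ring
  have hb3 : (Nat.fib (b + 3) : ℤ) = Nat.fib (b + 1) + Nat.fib (b + 2) := by
    rw [show b + 3 = (b + 1) + 2 from rfl, Nat.fib_add_two]; push_cast; ring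
  have hl : (lucas (b + 2) : ℤ) = Nat.fib (b + 1) + Nat.fib (b + 3) := by
    rw [lucas_eq (b + 1)]; push_cast; ring
  have hc := cassini a
  rw [h3, h1, h2, ha4, ha3, hb3, hl, hb3]
  linear_combination ((2 * (Nat.fib (b + 1) : ℤ) + Nat.fib (b + 2)) * hc)

theorem difference_identity (n N : ℕ) (hN : 3 ≤ N) (hn : 2 * N + 2 ≤ n) :
    (Nat.fib (N - 2) : ℤ) * Nat.fib (n - N) + (Nat.fib (n - 1) : ℤ) -
        (Nat.fib (N - 1) : ℤ) * Nat.fib (n - N - 1) -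
        (Nat.fib (N + 1) : ℤ) * Nat.fib (n - N - 1) -
        (Nat.fib (N - 1) : ℤ) * Nat.fib (n - N - 1) =
      (-1 : ℤ) ^ (N + 1) * lucas (n - 2 * N) := by
  obtain ⟨a, rfl⟩ : ∃ a, N = a + 3 := ⟨N - 3, by omega⟩
  obtain ⟨b, rfl⟩ : ∃ b, n = 2 * a + b + 8 := ⟨n - (2 * a + 8), by omega⟩
  rw [show a + 3 - 2 = a + 1 from by omega,
    show 2 * a + b + 8 - (a + 3) = a + b + 5 from by omega,
    show 2 * a + b + 8 - 1 = 2 * a + b + 7 from by omega,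
    show a + 3 - 1 = a + 2 from by omega,
    show a + b + 5 - 1 = a + b + 4 from by omega,
    show a + 3 + 1 = a + 4 from by omega,
    show 2 * a + b + 8 - 2 * (a + 3) = b + 2 from by omega,
    show a + 3 + 1 = a + 4 from by omega,
    show (-1 : ℤ) ^ (a + 4) = (-1) ^ a from by ring]
  exact key a b
end

section
/- Iterated form: for integers N ≥ 2 and n ≥ 8N, L_n = L_N * (L_{n-N} + (-1)^{N+1} L_{n-3N} + L_{n-5N} + (-1)^{N+1} L_{n-7N}) + L_{n-8N}. -/
lemma lucas_add_two (n : ℕ) : lucas (n + 2) = lucas (n + 1) + lucas n := rfl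

lemma lucas_cassini (n : ℕ) :
    (lucas (n + 1) : ℤ) ^ 2 - lucas n * lucas (n + 2) = 5 * (-1) ^ (n + 1) := by
  induction n with
  | zero => simp [lucas]
  | succ m ih =>
    have h1 : (lucas (m + 2) : ℤ) = lucas (m + 1) + lucas m := by
      rw [lucas_add_two]; push_cast; ring
    have h2 : (lucas (m + 3) : ℤ) = lucas (m + 2) + lucas (m + 1) := by
      rw [show m + 3 = (m + 1) + 2 from rfl, lucas_add_two]; push_cast; ring
    have : (lucas (m + 2) : ℤ) ^ 2 - lucas (m + 1) * lucas (m + 3) =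
        -((lucas (m + 1) : ℤ) ^ 2 - lucas m * lucas (m + 2)) := by
      rw [h2]; nlinarith [h1]
    rw [this, ih]; ring

lemma lucas_double (N : ℕ) :
    (lucas (2 * N) : ℤ) = (lucas N : ℤ) ^ 2 - 2 * (-1) ^ N ∧
    (lucas (2 * N + 1) : ℤ) = (lucas N : ℤ) * lucas (N + 1) - (-1) ^ N := by
  induction N with
  | zero => simp [lucas]
  | succ m ih =>
    obtain ⟨hA, hB⟩ := ih
    have cas := lucas_cassini m
    have h1 : (lucas (2 * m + 2) : ℤ) = lucas (2 * m + 1) + lucas (2 * m) := by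
      rw [lucas_add_two]; push_cast; ring
    have h2 : (lucas (2 * m + 3) : ℤ) = lucas (2 * m + 2) + lucas (2 * m + 1) := by
      rw [show 2 * m + 3 = (2 * m + 1) + 2 from rfl, lucas_add_two]; push_cast; ring
    have h3 : (lucas (m + 2) : ℤ) = lucas (m + 1) + lucas m := by
      rw [lucas_add_two]; push_cast; ring
    have e1 : 2 * (m + 1) = 2 * m + 2 := by ring
    have e2 : 2 * (m + 1) + 1 = 2 * m + 3 := by ring
    have hA' : (lucas (2 * m + 2) : ℤ) = (lucas (m + 1) : ℤ) ^ 2 - 2 * (-1) ^ (m + 1) := by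
      rw [h1, hA, hB]
      have : ((-1 : ℤ)) ^ (m + 1) = -(-1) ^ m := by ring
      rw [this]; nlinarith [cas, h3]
    constructor
    · rw [e1, hA']
    · rw [e2, h2, hA', hB, h3]
      have : ((-1 : ℤ)) ^ (m + 1) = -(-1) ^ m := by ring
      rw [this]; ring

lemma lucas_step (N k : ℕ) :
    (lucas (k + 2 * N) : ℤ) = lucas N * lucas (k + N) + (-1) ^ (N + 1) * lucas k := by
  induction k using Nat.twoStepInduction with
  | zero =>
    have := (lucas_double N).1
    simp only [Nat.zero_add] at *
    rw [this]; simp [lucas]; ring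
  | one =>
    have := (lucas_double N).2
    rw [show 1 + 2 * N = 2 * N + 1 by ring, this, show 1 + N = N + 1 by ring]
    simp [lucas]; ring
  | more m ih1 ih2 =>
    have h1 : (lucas (m + 2 + 2 * N) : ℤ) = lucas (m + 1 + 2 * N) + lucas (m + 2 * N) := by
      rw [show m + 2 + 2 * N = (m + 2 * N) + 2 by ring, lucas_add_two,
        show m + 2 * N + 1 = m + 1 + 2 * N by ring]
      push_cast; ring
    have h2 : (lucas (m + 2 + N) : ℤ) = lucas (m + 1 + N) + lucas (m + N) := by
      rw [show m + 2 + N = (m + N) + 2 by ring, lucas_add_two,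
        show m + N + 1 = m + 1 + N by ring]
      push_cast; ring
    have h3 : (lucas (m + 2) : ℤ) = lucas (m + 1) + lucas m := by
      rw [lucas_add_two]; push_cast; ring
    rw [h1, h2, h3, ih1, ih2]; ring

theorem iterated_four (N n : ℕ) (hN : 2 ≤ N) (hn : 8 * N ≤ n) :
    (lucas n : ℤ) =
      (lucas N : ℤ) *
          ((lucas (n - N) : ℤ) + (-1 : ℤ) ^ (N + 1) * lucas (n - 3 * N) +
            (lucas (n - 5 * N) : ℤ) + (-1 : ℤ) ^ (N + 1) * lucas (n - 7 * N)) +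
        (lucas (n - 8 * N) : ℤ) := by
  have s1 := lucas_step N (n - 2 * N)
  have s2 := lucas_step N (n - 4 * N)
  have s3 := lucas_step N (n - 6 * N)
  have s4 := lucas_step N (n - 8 * N)
  rw [show n - 2 * N + 2 * N = n by omega, show n - 2 * N + N = n - N by omega] at s1
  rw [show n - 4 * N + 2 * N = n - 2 * N by omega,
    show n - 4 * N + N = n - 3 * N by omega] at s2
  rw [show n - 6 * N + 2 * N = n - 4 * N by omega,
    show n - 6 * N + N = n - 5 * N by omega] at s3
  rw [show n - 8 * N + 2 * N = n - 6 * N by omega,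
    show n - 8 * N + N = n - 7 * N by omega] at s4
  have hsq : ((-1 : ℤ)) ^ (N + 1) * (-1) ^ (N + 1) = 1 := by
    rw [← pow_add]; exact Even.neg_one_pow ⟨N + 1, rfl⟩
  rw [s1, s2, s3, s4]
  linear_combination ((lucas N : ℤ) * lucas (n - 5 * N) +
    (-1) ^ (N + 1) * lucas N * lucas (n - 7 * N) +
    ((-1) ^ (N + 1) * (-1) ^ (N + 1) + 1) * lucas (n - 8 * N)) * hsq
end

section
/- Gibonacci version of the one-step identity: let G_0, G_1 be arbitrary integers and G_n = G_{n-1} + G_{n-2}. Then for n ≥ 2N ≥ 0, G_n = L_N * G_{n-N} + (-1)^{N+1} * G_{n-2N}, where L is the Lucas sequence. -/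
lemma gib_key (G : ℕ → ℤ) (hG : ∀ n, G (n + 2) = G (n + 1) + G n) :
    ∀ N m, G (m + 2 * N) = (lucas N : ℤ) * G (m + N) + (-1 : ℤ) ^ (N + 1) * G m := by
  intro N
  induction N using Nat.twoStepInduction with
  | zero => intro m; simp [lucas]; ring
  | one =>
    intro m
    have := hG m
    simp only [lucas]
    push_cast
    omega
  | more N ih0 ih1 =>
    intro m
    have h1 := ih1 (m + 2)
    have h1' := ih1 m
    have h0 := ih0 (m + 2)
    have e1 : m + 2 + 2 * (N + 1) = m + 2 * N + 4 := by ring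
    have e2 : m + 2 + (N + 1) = m + N + 1 + 2 := by ring
    have e3 : m + 2 * (N + 1) = m + 2 * N + 2 := by ring
    have e4 : m + (N + 1) = m + N + 1 := by ring
    have e5 : m + 2 + 2 * N = m + 2 * N + 2 := by ring
    have e6 : m + 2 + N = m + N + 2 := by ring
    rw [e1, e2, hG (m + N + 1)] at h1
    rw [e3, e4] at h1'
    rw [e5, e6] at h0
    have hL : (lucas (N + 2) : ℤ) = lucas (N + 1) + lucas N := by
      simp [lucas]
    have e7 : m + 2 * (N + 2) = m + 2 * N + 4 := by ring
    have e8 : m + (N + 2) = m + N + 2 := by ring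
    rw [hL, e7, e8]
    linear_combination h1 - h1' + h0

theorem gibonacci_one_step (G : ℕ → ℤ) (hG : ∀ n, G (n + 2) = G (n + 1) + G n)
    (n N : ℕ) (h : 2 * N ≤ n) :
    G n = (lucas N : ℤ) * G (n - N) + (-1 : ℤ) ^ (N + 1) * G (n - 2 * N) := by
  have key := gib_key G hG N (n - 2 * N)
  have e1 : n - 2 * N + 2 * N = n := by omega
  have e2 : n - 2 * N + N = n - N := by omega
  rw [e1, e2] at key
  exact key
end
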